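/- Minimizer of spectral contrastive loss (matrix form): Let $D = \mathrm{diag}(s_1^2, s_2^2, \ldots)$ with $s_1 \ge s_2 \ge \cdots \ge 0$ (possibly infinite, in $\ell^2$). For any matrix $C$ with $d$ rows (columns indexed by $i \ge 1$) and $B = C^\top C$, the contrastive loss $\mathcal{L}(C) = -\sum_i s_i^2 B_{ii} + \frac{1}{2}\sum_{i,j} B_{ij}^2$ satisfies $\mathcal{L}(C) = \frac{1}{2}\|B - D\|_F^2 - \frac{1}{2}\|D\|_F^2$, and is minimized over rank-$\le d$ positive semidefinite $B$ exactly when $B = \mathrm{diag}(s_1^2, \ldots, s_d^2, 0, 0, \ldots)$ (assuming $s_d > s_{d+1}$). -/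

import Mathlib

set_option maxHeartbeats 1000000

open Finset

private lemma summable_mul_of_sq {f g : ℕ → ℝ} (hf : Summable fun i => f i ^ 2)
    (hg : Summable fun i => g i ^ 2) : Summable fun i => f i * g i := by
  apply Summable.of_abs
  apply Summable.of_nonneg_of_le (fun i => abs_nonneg _) (fun i => ?_)
    ((hf.add hg).div_const 2)
  rw [abs_mul]
  nlinarith [sq_nonneg (|f i| - |g i|), sq_abs (f i), sq_abs (g i), abs_nonneg (f i),
    abs_nonneg (g i)]

private lemma summable_lincomb_sq {n : ℕ} {f : Fin n → ℕ → ℝ}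
    (hf : ∀ k, Summable fun i => f k i ^ 2) (x : Fin n → ℝ) :
    Summable fun i => (∑ k, x k * f k i) ^ 2 := by
  refine Summable.of_nonneg_of_le (fun i => sq_nonneg _) (fun i => ?_)
    ((summable_sum (s := Finset.univ) (fun k _ => hf k)).mul_left (∑ k, x k ^ 2))
  exact Finset.sum_mul_sq_le_sq_mul_sq Finset.univ x (fun k => f k i)

private lemma pow4_le_pow4 {a b : ℝ} (ha : 0 ≤ a) (hab : a ≤ b) : (a ^ 2) ^ 2 ≤ (b ^ 2) ^ 2 := by
  have h := pow_le_pow_left₀ ha hab 4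
  calc (a ^ 2) ^ 2 = a ^ 4 := by ring
    _ ≤ b ^ 4 := h
    _ = (b ^ 2) ^ 2 := by ring

private lemma pow4_lt_pow4 {a b : ℝ} (ha : 0 ≤ a) (hab : a < b) : (a ^ 2) ^ 2 < (b ^ 2) ^ 2 := by
  have h := pow_lt_pow_left₀ hab ha (n := 4) (by norm_num)
  calc (a ^ 2) ^ 2 = a ^ 4 := by ring
    _ < b ^ 4 := h
    _ = (b ^ 2) ^ 2 := by ring

private lemma scl_core (d : ℕ) (s : ℕ → ℝ) (hmono : Antitone s) (hs : ∀ i, 0 ≤ s i)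
    (C : Fin d → ℕ → ℝ) (hC : ∀ k, Summable fun i => (C k i) ^ 2) :
    ∃ u : ℕ → ℝ,
      (∀ i, 0 ≤ u i) ∧ (∀ i, u i ≤ 1) ∧ Summable u ∧ (∑' i, u i) ≤ (d : ℝ) ∧
      (∀ i, Summable fun j => (∑ k, C k i * C k j) ^ 2) ∧
      (Summable fun i => ∑' j, (∑ k, C k i * C k j) ^ 2) ∧
      (Summable fun i => s i ^ 2 * (∑ k, C k i * C k i)) ∧
      -(∑' i, u i * (s i ^ 2) ^ 2) ≤
        (∑' i, ∑' j, (∑ k, C k i * C k j) ^ 2) - 2 * ∑' i, s i ^ 2 * (∑ k, C k i * C k i) ∧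
      (∀ i, u i = 0 → ∀ j, (∑ k, C k i * C k j) = 0 ∧ (∑ k, C k j * C k i) = 0) := by
  classical
  have hs0 : ∀ i, s i ^ 2 ≤ s 0 ^ 2 := fun i => pow_le_pow_left₀ (hs i) (hmono (Nat.zero_le i)) 2
  set G : Matrix (Fin d) (Fin d) ℝ := Matrix.of (fun k l => ∑' i, C k i * C l i) with hGdef
  have hGsymm : G.IsHermitian := by
    show G.conjTranspose = G
    ext k l
    simp only [Matrix.conjTranspose_apply, hGdef, Matrix.of_apply, star_trivial]
    exact tsum_congr fun i => mul_comm _ _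
  set lam := hGsymm.eigenvalues with hlamdef
  set v : Fin d → ℕ → ℝ := fun k i => ∑ m, hGsymm.eigenvectorBasis k m * C m i with hvdef
  have hvsq : ∀ k, Summable fun i => v k i ^ 2 := fun k => summable_lincomb_sq hC _
  have hvv : ∀ k l, Summable fun i => v k i * v l i :=
    fun k l => summable_mul_of_sq (hvsq k) (hvsq l)
  -- orthogonality of the v's
  have horth : ∀ k l, ∑' i, v k i * v l i = if k = l then lam k else 0 := by
    intro k l
    have hinner : ∀ m : Fin d, ∑' i, C m i * v l i
        = lam l * hGsymm.eigenvectorBasis l m := by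
      intro m
      have h1 : ∀ i, C m i * v l i
          = ∑ m', hGsymm.eigenvectorBasis l m' * (C m i * C m' i) := by
        intro i
        rw [hvdef]; simp only []
        rw [Finset.mul_sum]
        exact Finset.sum_congr rfl fun m' _ => by ring
      rw [tsum_congr h1,
        Summable.tsum_finsetSum (s := Finset.univ)
          (fun m' _ => (summable_mul_of_sq (hC m) (hC m')).mul_left _)]
      have h2 : ∀ m' : Fin d, ∑' i, hGsymm.eigenvectorBasis l m' * (C m i * C m' i)
          = hGsymm.eigenvectorBasis l m' * G m m' := by
        intro m'
        rw [Summable.tsum_mul_left _ (summable_mul_of_sq (hC m) (hC m'))]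
        rfl
      rw [Finset.sum_congr rfl fun m' _ => h2 m']
      have h := congrFun (hGsymm.mulVec_eigenvectorBasis l) m
      simp only [Matrix.mulVec, dotProduct, Pi.smul_apply, smul_eq_mul] at h
      rw [← h]
      exact Finset.sum_congr rfl fun m' _ => mul_comm _ _
    have h1 : ∀ i, v k i * v l i
        = ∑ m, hGsymm.eigenvectorBasis k m * (C m i * v l i) := by
      intro i
      rw [hvdef]; simp only []
      rw [Finset.sum_mul]
      exact Finset.sum_congr rfl fun m _ => by ring
    rw [tsum_congr h1,
      Summable.tsum_finsetSum (s := Finset.univ)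
        (fun m _ => (summable_mul_of_sq (hC m) (hvsq l)).mul_left _)]
    have h2 : ∀ m : Fin d, ∑' i, hGsymm.eigenvectorBasis k m * (C m i * v l i)
        = hGsymm.eigenvectorBasis k m * (lam l * hGsymm.eigenvectorBasis l m) := by
      intro m
      rw [Summable.tsum_mul_left _ (summable_mul_of_sq (hC m) (hvsq l)), hinner m]
    rw [Finset.sum_congr rfl fun m _ => h2 m]
    have horthb := (hGsymm.eigenvectorBasis).orthonormal
    rw [orthonormal_iff_ite] at horthb
    have h3 := horthb k l
    rw [PiLp.inner_apply] at h3
    simp only [RCLike.inner_apply, conj_trivial] at h3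
    have h4 : ∑ m, hGsymm.eigenvectorBasis k m * (lam l * hGsymm.eigenvectorBasis l m)
        = lam l * ∑ m, hGsymm.eigenvectorBasis k m * hGsymm.eigenvectorBasis l m := by
      rw [Finset.mul_sum]
      exact Finset.sum_congr rfl fun m _ => by ring
    rw [h4, show (∑ m, hGsymm.eigenvectorBasis k m * hGsymm.eigenvectorBasis l m) = _ from
      (Finset.sum_congr rfl fun m _ => mul_comm _ _).trans h3]
    by_cases hkl : k = l
    · subst hkl; simp
    · simp [hkl]
  have hlam_eq : ∀ k, ∑' i, v k i ^ 2 = lam k := by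
    intro k
    have := horth k k
    simp at this
    rw [← this]
    exact tsum_congr fun i => sq (v k i)
  have hlam_nonneg : ∀ k, 0 ≤ lam k := by
    intro k
    rw [← hlam_eq k]
    exact tsum_nonneg fun i => sq_nonneg _
  have hlam0 : ∀ k, lam k = 0 → ∀ i, v k i = 0 := by
    intro k hk i
    have h1 : v k i ^ 2 ≤ ∑' i, v k i ^ 2 := Summable.le_tsum (hvsq k) i fun j _ => sq_nonneg _
    rw [hlam_eq k, hk] at h1
    have := sq_nonneg (v k i)
    have : v k i ^ 2 = 0 := le_antisymm h1 this
    exact pow_eq_zero_iff (by norm_num) |>.mp this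
  -- B in terms of v
  have hBv : ∀ i j, (∑ k, C k i * C k j) = ∑ k, v k i * v k j := by
    intro i j
    have h := (hGsymm.eigenvectorBasis).sum_inner_mul_inner
      ((WithLp.equiv 2 (Fin d → ℝ)).symm (fun m => C m i))
      ((WithLp.equiv 2 (Fin d → ℝ)).symm (fun m => C m j))
    simp only [PiLp.inner_apply, RCLike.inner_apply, conj_trivial,
      WithLp.equiv_symm_apply, PiLp.toLp_apply] at h
    rw [Finset.sum_congr rfl fun k _ => mul_comm (C k i) (C k j), ← h]
    exact Finset.sum_congr rfl fun k _ => by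
      rw [Finset.sum_congr rfl fun m _ => mul_comm (C m j) (hGsymm.eigenvectorBasis k m)]
  -- row sums of B²
  have hBrow : ∀ i, Summable fun j => (∑ k, C k i * C k j) ^ 2 :=
    fun i => summable_lincomb_sq hC (fun k => C k i)
  have hrowsum : ∀ i, ∑' j, (∑ k, C k i * C k j) ^ 2 = ∑ k, lam k * v k i ^ 2 := by
    intro i
    have h1 : ∀ j, (∑ k, C k i * C k j) ^ 2
        = ∑ k, ∑ l, (v k i * v l i) * (v k j * v l j) := by
      intro j
      rw [hBv i j, sq, Finset.sum_mul_sum]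
      exact Finset.sum_congr rfl fun k _ => Finset.sum_congr rfl fun l _ => by ring
    rw [tsum_congr h1,
      Summable.tsum_finsetSum (s := Finset.univ) (fun k _ => summable_sum (s := Finset.univ)
        (fun l _ => (hvv k l).mul_left _))]
    refine Finset.sum_congr rfl fun k _ => ?_
    rw [Summable.tsum_finsetSum (s := Finset.univ) (fun l _ => (hvv k l).mul_left _)]
    have h2 : ∀ l : Fin d, ∑' j, (v k i * v l i) * (v k j * v l j)
        = (v k i * v l i) * (if k = l then lam k else 0) := by
      intro l
      rw [Summable.tsum_mul_left _ (hvv k l), horth k l]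
    rw [Finset.sum_congr rfl fun l _ => h2 l]
    rw [Finset.sum_congr rfl fun l _ => mul_ite (k = l) (v k i * v l i) (lam k) 0]
    simp [Finset.sum_ite_eq]
    ring
  have hO3 : Summable fun i => ∑' j, (∑ k, C k i * C k j) ^ 2 := by
    rw [funext hrowsum]
    exact summable_sum (s := Finset.univ) fun k _ => (hvsq k).mul_left _
  have hBB : ∑' i, ∑' j, (∑ k, C k i * C k j) ^ 2 = ∑ k, lam k ^ 2 := by
    rw [tsum_congr hrowsum,
      Summable.tsum_finsetSum (s := Finset.univ) (fun k _ => (hvsq k).mul_left _)]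
    refine Finset.sum_congr rfl fun k _ => ?_
    rw [Summable.tsum_mul_left _ (hvsq k), hlam_eq k, sq]
  -- diagonal
  have hqsummand : ∀ k, Summable fun i => s i ^ 2 * v k i ^ 2 := by
    intro k
    refine Summable.of_nonneg_of_le (fun i => mul_nonneg (sq_nonneg _) (sq_nonneg _))
      (fun i => ?_) ((hvsq k).mul_left (s 0 ^ 2))
    exact mul_le_mul_of_nonneg_right (hs0 i) (sq_nonneg _)
  have hdiag : ∀ i, s i ^ 2 * (∑ k, C k i * C k i) = ∑ k, s i ^ 2 * v k i ^ 2 := by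
    intro i
    rw [hBv i i, Finset.mul_sum]
    exact Finset.sum_congr rfl fun k _ => by ring
  have hO1 : Summable fun i => s i ^ 2 * (∑ k, C k i * C k i) := by
    rw [funext hdiag]
    exact summable_sum (s := Finset.univ) fun k _ => hqsummand k
  have hqeq : ∑' i, s i ^ 2 * (∑ k, C k i * C k i) = ∑ k, ∑' i, s i ^ 2 * v k i ^ 2 := by
    rw [tsum_congr hdiag, Summable.tsum_finsetSum (s := Finset.univ) (fun k _ => hqsummand k)]
  -- the weights w and u
  set w : Fin d → ℕ → ℝ := fun k i => if lam k = 0 then 0 else v k i ^ 2 / lam k with hwdef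
  have hw_nonneg : ∀ k i, 0 ≤ w k i := by
    intro k i
    by_cases h : lam k = 0 <;> simp [hwdef, h]
    exact div_nonneg (sq_nonneg _) (hlam_nonneg k)
  have hw_summable : ∀ k, Summable (w k) := by
    intro k
    by_cases h : lam k = 0
    · simp only [hwdef, if_pos h]
      exact summable_zero
    · simp only [hwdef, if_neg h]
      exact (hvsq k).div_const _
  have hw_tsum : ∀ k, ∑' i, w k i = if lam k = 0 then 0 else 1 := by
    intro k
    by_cases h : lam k = 0 <;> simp [hwdef, h]
    rw [tsum_div_const, hlam_eq k, div_self h]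
  set u : ℕ → ℝ := fun i => ∑ k, w k i with hudef
  have hu_nonneg : ∀ i, 0 ≤ u i := fun i => Finset.sum_nonneg fun k _ => hw_nonneg k i
  have hu_summable : Summable u := summable_sum (s := Finset.univ) fun k _ => hw_summable k
  have hu_tsum : (∑' i, u i) ≤ (d : ℝ) := by
    rw [hudef, Summable.tsum_finsetSum (s := Finset.univ) (fun k _ => hw_summable k)]
    calc ∑ k, ∑' i, w k i ≤ ∑ k : Fin d, (1 : ℝ) := by
          refine Finset.sum_le_sum fun k _ => ?_
          rw [hw_tsum k]
          by_cases h : lam k = 0 <;> simp [h]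
      _ = d := by simp
  -- u ≤ 1
  have hu_le_one : ∀ i, u i ≤ 1 := by
    intro i
    set c : Fin d → ℝ := fun k => if lam k = 0 then 0 else v k i / lam k with hcdef
    have hy_summ : Summable fun j => (∑ k, c k * v k j) ^ 2 := summable_lincomb_sq hvsq c
    have hyi : (∑ k, c k * v k i) = u i := by
      refine Finset.sum_congr rfl fun k _ => ?_
      by_cases h : lam k = 0 <;> simp [hcdef, hwdef, h]
      rw [div_mul_eq_mul_div, ← sq]
    have hyt : ∑' j, (∑ k, c k * v k j) ^ 2 = u i := by
      have h1 : ∀ j, (∑ k, c k * v k j) ^ 2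
          = ∑ k, ∑ l, (c k * c l) * (v k j * v l j) := by
        intro j
        rw [sq, Finset.sum_mul_sum]
        exact Finset.sum_congr rfl fun k _ => Finset.sum_congr rfl fun l _ => by ring
      rw [tsum_congr h1,
        Summable.tsum_finsetSum (s := Finset.univ) (fun k _ => summable_sum (s := Finset.univ)
          (fun l _ => (hvv k l).mul_left _))]
      refine Finset.sum_congr rfl fun k _ => ?_
      rw [Summable.tsum_finsetSum (s := Finset.univ) (fun l _ => (hvv k l).mul_left _)]
      have h2 : ∀ l : Fin d, ∑' j, (c k * c l) * (v k j * v l j)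
          = (c k * c l) * (if k = l then lam k else 0) := by
        intro l
        rw [Summable.tsum_mul_left _ (hvv k l), horth k l]
      rw [Finset.sum_congr rfl fun l _ => h2 l]
      rw [Finset.sum_congr rfl fun l _ => mul_ite (k = l) (c k * c l) (lam k) 0]
      simp [Finset.sum_ite_eq]
      by_cases h : lam k = 0
      · simp [hcdef, hwdef, h]
      · simp only [hcdef, hwdef, if_neg h]
        field_simp
    have h4 := Summable.le_tsum hy_summ i fun j _ => sq_nonneg _
    rw [hyt, hyi] at h4
    nlinarith [h4]
  -- main inequality
  have hkey : ∀ k, 0 ≤ lam k ^ 2 - 2 * (∑' i, s i ^ 2 * v k i ^ 2)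
      + ∑' i, (s i ^ 2) ^ 2 * w k i := by
    intro k
    by_cases h : lam k = 0
    · have hv0 : ∀ i, v k i = 0 := hlam0 k h
      have h1 : ∑' i, s i ^ 2 * v k i ^ 2 = 0 := by
        rw [tsum_congr (fun i => by rw [hv0 i]; ring : ∀ i,
          s i ^ 2 * v k i ^ 2 = 0)]
        exact tsum_zero
      have h2 : ∑' i, (s i ^ 2) ^ 2 * w k i = 0 := by
        rw [tsum_congr (fun i => by simp [hwdef, h] : ∀ i, (s i ^ 2) ^ 2 * w k i = 0)]
        exact tsum_zero
      rw [h1, h2]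
      simpa using sq_nonneg (lam k)
    · have hlampos : 0 < lam k := lt_of_le_of_ne (hlam_nonneg k) (Ne.symm h)
      have hQsummand : Summable fun i => s i ^ 2 * w k i := by
        refine Summable.of_nonneg_of_le (fun i => mul_nonneg (sq_nonneg _) (hw_nonneg k i))
          (fun i => ?_) ((hw_summable k).mul_left (s 0 ^ 2))
        exact mul_le_mul_of_nonneg_right (hs0 i) (hw_nonneg k i)
      have hRsummand : Summable fun i => (s i ^ 2) ^ 2 * w k i := by
        refine Summable.of_nonneg_of_le (fun i => mul_nonneg (sq_nonneg _) (hw_nonneg k i))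
          (fun i => ?_) ((hw_summable k).mul_left ((s 0 ^ 2) ^ 2))
        exact mul_le_mul_of_nonneg_right
          (pow_le_pow_left₀ (sq_nonneg _) (hs0 i) 2) (hw_nonneg k i)
      set Q := ∑' i, s i ^ 2 * w k i with hQdef
      have hqQ : ∑' i, s i ^ 2 * v k i ^ 2 = lam k * Q := by
        rw [hQdef, ← Summable.tsum_mul_left _ hQsummand]
        refine tsum_congr fun i => ?_
        simp only [hwdef, if_neg h]
        field_simp
      have hRQ : Q ^ 2 ≤ ∑' i, (s i ^ 2) ^ 2 * w k i := by
        have hexp : ∀ i, (s i ^ 2 - Q) ^ 2 * w k i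
            = ((s i ^ 2) ^ 2 * w k i - 2 * Q * (s i ^ 2 * w k i)) + Q ^ 2 * w k i := by
          intro i; ring
        have h0 : (0:ℝ) ≤ ∑' i, (s i ^ 2 - Q) ^ 2 * w k i :=
          tsum_nonneg fun i => mul_nonneg (sq_nonneg _) (hw_nonneg k i)
        rw [tsum_congr hexp,
          Summable.tsum_add (hRsummand.sub (hQsummand.mul_left (2 * Q)))
            ((hw_summable k).mul_left (Q ^ 2)),
          Summable.tsum_sub hRsummand (hQsummand.mul_left (2 * Q)),
          Summable.tsum_mul_left _ hQsummand, Summable.tsum_mul_left _ (hw_summable k),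
          hw_tsum k, if_neg h] at h0
        nlinarith [h0]
      rw [hqQ]
      nlinarith [hRQ, sq_nonneg (lam k - Q)]
  have hrsummand : ∀ k : Fin d, Summable fun i => (s i ^ 2) ^ 2 * w k i := by
    intro k
    refine Summable.of_nonneg_of_le (fun i => mul_nonneg (sq_nonneg _) (hw_nonneg k i))
      (fun i => ?_) ((hw_summable k).mul_left ((s 0 ^ 2) ^ 2))
    exact mul_le_mul_of_nonneg_right
      (pow_le_pow_left₀ (sq_nonneg _) (hs0 i) 2) (hw_nonneg k i)
  have hrsum : ∑ k, ∑' i, (s i ^ 2) ^ 2 * w k i = ∑' i, u i * (s i ^ 2) ^ 2 := by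
    rw [← Summable.tsum_finsetSum (s := Finset.univ) (fun k _ => hrsummand k)]
    refine tsum_congr fun i => ?_
    show ∑ k, (s i ^ 2) ^ 2 * w k i = (∑ k, w k i) * (s i ^ 2) ^ 2
    rw [Finset.sum_mul]
    exact Finset.sum_congr rfl fun k _ => mul_comm _ _
  have hmain : -(∑' i, u i * (s i ^ 2) ^ 2) ≤
      (∑' i, ∑' j, (∑ k, C k i * C k j) ^ 2) - 2 * ∑' i, s i ^ 2 * (∑ k, C k i * C k i) := by
    have h0 : (0:ℝ) ≤ ∑ k, (lam k ^ 2 - 2 * (∑' i, s i ^ 2 * v k i ^ 2)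
        + ∑' i, (s i ^ 2) ^ 2 * w k i) := Finset.sum_nonneg fun k _ => hkey k
    rw [Finset.sum_add_distrib, Finset.sum_sub_distrib, hrsum] at h0
    rw [hBB, hqeq]
    rw [← Finset.mul_sum] at h0
    linarith [h0]
  -- vanishing rows
  have hzero : ∀ i, u i = 0 → ∀ j, (∑ k, C k i * C k j) = 0 ∧ (∑ k, C k j * C k i) = 0 := by
    intro i hui j
    have hw0 : ∀ k, w k i = 0 := by
      have := (Finset.sum_eq_zero_iff_of_nonneg (fun k _ => hw_nonneg k i)).mp hui
      exact fun k => this k (Finset.mem_univ k)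
    have hv0 : ∀ k, v k i = 0 := by
      intro k
      by_cases h : lam k = 0
      · exact hlam0 k h i
      · have hwz := hw0 k
        simp only [hwdef, if_neg h] at hwz
        rcases div_eq_zero_iff.mp hwz with h2 | h2
        · exact pow_eq_zero_iff (by norm_num) |>.mp h2
        · exact absurd h2 h
    constructor
    · rw [hBv i j]
      exact Finset.sum_eq_zero fun k _ => by rw [hv0 k, zero_mul]
    · rw [hBv j i]
      exact Finset.sum_eq_zero fun k _ => by rw [hv0 k, mul_zero]
  exact ⟨u, hu_nonneg, hu_le_one, hu_summable, hu_tsum, hBrow, hO3, hO1, hmain, hzero⟩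

private lemma scl_expand (d : ℕ) (s : ℕ → ℝ)
    (hs4 : Summable fun i => ((s i) ^ 2) ^ 2)
    (C : Fin d → ℕ → ℝ)
    (hO2 : ∀ i, Summable fun j => (∑ k, C k i * C k j) ^ 2)
    (hO3 : Summable fun i => ∑' j, (∑ k, C k i * C k j) ^ 2)
    (hO1 : Summable fun i => s i ^ 2 * (∑ k, C k i * C k i)) :
    (∀ i, Summable fun j =>
      ((∑ k, C k i * C k j) - (if i = j then s i ^ 2 else 0)) ^ 2) ∧
    (Summable fun i => ∑' j,
      ((∑ k, C k i * C k j) - (if i = j then s i ^ 2 else 0)) ^ 2) ∧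
    (∑' i, ∑' j, ((∑ k, C k i * C k j) - (if i = j then s i ^ 2 else 0)) ^ 2)
      = (∑' i, ∑' j, (∑ k, C k i * C k j) ^ 2) + (∑' i, ((s i) ^ 2) ^ 2)
        - 2 * ∑' i, s i ^ 2 * (∑ k, C k i * C k i) := by
  classical
  have hpt : ∀ i j, ((∑ k, C k i * C k j) - (if i = j then s i ^ 2 else 0)) ^ 2
      = (∑ k, C k i * C k j) ^ 2
        + (if j = i then ((∑ k, C k i * C k i) - s i ^ 2) ^ 2
            - (∑ k, C k i * C k i) ^ 2 else 0) := by
    intro i j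
    by_cases h : j = i
    · subst h
      rw [if_pos rfl, if_pos rfl]
      ring
    · rw [if_neg (Ne.symm h), if_neg h]
      ring
  have hS : ∀ i, Summable fun j =>
      (if j = i then ((∑ k, C k i * C k i) - s i ^ 2) ^ 2
        - (∑ k, C k i * C k i) ^ 2 else 0) :=
    fun i => (hasSum_ite_eq i _).summable
  have h1 : ∀ i, Summable fun j =>
      ((∑ k, C k i * C k j) - (if i = j then s i ^ 2 else 0)) ^ 2 := by
    intro i
    rw [funext (hpt i)]
    exact (hO2 i).add (hS i)
  have h2 : ∀ i, ∑' j, ((∑ k, C k i * C k j) - (if i = j then s i ^ 2 else 0)) ^ 2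
      = (∑' j, (∑ k, C k i * C k j) ^ 2)
        + (((s i) ^ 2) ^ 2 - 2 * (s i ^ 2 * (∑ k, C k i * C k i))) := by
    intro i
    rw [tsum_congr (hpt i), Summable.tsum_add (hO2 i) (hS i), tsum_ite_eq]
    ring
  have hsummand2 : Summable fun i => ((s i) ^ 2) ^ 2 - 2 * (s i ^ 2 * (∑ k, C k i * C k i)) :=
    hs4.sub (hO1.mul_left 2)
  have h3 : Summable fun i => ∑' j,
      ((∑ k, C k i * C k j) - (if i = j then s i ^ 2 else 0)) ^ 2 := by
    rw [funext h2]
    exact hO3.add hsummand2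
  refine ⟨h1, h3, ?_⟩
  rw [tsum_congr h2, Summable.tsum_add hO3 hsummand2, Summable.tsum_sub hs4 (hO1.mul_left 2),
    Summable.tsum_mul_left 2 hO1]
  ring

private lemma scl_tail (d : ℕ) (hd : 0 < d) (s : ℕ → ℝ) (hmono : Antitone s)
    (hs : ∀ i, 0 ≤ s i)
    (hs4 : Summable fun i => ((s i) ^ 2) ^ 2)
    (u : ℕ → ℝ) (hu0 : ∀ i, 0 ≤ u i) (hu1 : ∀ i, u i ≤ 1) (husum : Summable u)
    (hud : (∑' i, u i) ≤ (d : ℝ)) :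
    (∑' i, u i * ((s i) ^ 2) ^ 2) ≤ (∑ i ∈ Finset.range d, ((s i) ^ 2) ^ 2) ∧
    (s d < s (d - 1) →
      (∑' i, u i * ((s i) ^ 2) ^ 2) = (∑ i ∈ Finset.range d, ((s i) ^ 2) ^ 2) →
      ∀ i, d ≤ i → u i = 0) := by
  have hus4 : Summable fun i => u i * ((s i) ^ 2) ^ 2 := by
    refine Summable.of_nonneg_of_le (fun i => mul_nonneg (hu0 i) (sq_nonneg _))
      (fun i => ?_) hs4
    nlinarith [hu1 i, sq_nonneg ((s i) ^ 2), hu0 i]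
  have hsplit := Summable.sum_add_tsum_nat_add (f := fun i => u i * ((s i) ^ 2) ^ 2) d hus4
  have husplit := Summable.sum_add_tsum_nat_add (f := u) d husum
  have hutail : Summable fun i => u (i + d) := (summable_nat_add_iff d).mpr husum
  have htail4 : Summable fun i => u (i + d) * ((s (i + d)) ^ 2) ^ 2 :=
    (summable_nat_add_iff d).mpr hus4
  have hsd : ∀ i, ((s (i + d)) ^ 2) ^ 2 ≤ ((s d) ^ 2) ^ 2 := by
    intro i
    have h1 : s (i + d) ≤ s d := hmono (Nat.le_add_left d i)
    exact pow4_le_pow4 (hs (i + d)) h1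
  have htail_le : (∑' i, u (i + d) * ((s (i + d)) ^ 2) ^ 2)
      ≤ ((s d) ^ 2) ^ 2 * ∑' i, u (i + d) := by
    rw [← Summable.tsum_mul_left _ hutail]
    refine Summable.tsum_le_tsum (fun i => ?_) htail4 (hutail.mul_left _)
    calc u (i + d) * ((s (i + d)) ^ 2) ^ 2 ≤ u (i + d) * ((s d) ^ 2) ^ 2 :=
          mul_le_mul_of_nonneg_left (hsd i) (hu0 _)
      _ = ((s d) ^ 2) ^ 2 * u (i + d) := mul_comm _ _
  have hF_nonneg : 0 ≤ ∑' i, u (i + d) := tsum_nonneg fun i => hu0 _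
  have hFE : (∑' i, u (i + d)) ≤ ∑ i ∈ Finset.range d, (1 - u i) := by
    have hE : ∑ i ∈ Finset.range d, (1 - u i)
        = (d : ℝ) - ∑ i ∈ Finset.range d, u i := by
      rw [Finset.sum_sub_distrib]
      simp
    rw [hE]
    linarith [husplit, hud]
  have hcomb : ∑ i ∈ Finset.range d, u i * ((s i) ^ 2) ^ 2
      + ∑ i ∈ Finset.range d, (1 - u i) * ((s i) ^ 2) ^ 2
      = ∑ i ∈ Finset.range d, ((s i) ^ 2) ^ 2 := by
    rw [← Finset.sum_add_distrib]
    exact Finset.sum_congr rfl fun i _ => by ring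
  have hsd_le : ∀ i ∈ Finset.range d, ((s d) ^ 2) ^ 2 ≤ ((s i) ^ 2) ^ 2 := by
    intro i hi
    have h1 : s d ≤ s i := hmono (le_of_lt (Finset.mem_range.mp hi))
    exact pow4_le_pow4 (hs d) h1
  have hstep : ((s d) ^ 2) ^ 2 * ∑ i ∈ Finset.range d, (1 - u i)
      ≤ ∑ i ∈ Finset.range d, (1 - u i) * ((s i) ^ 2) ^ 2 := by
    rw [Finset.mul_sum]
    refine Finset.sum_le_sum fun i hi => ?_
    have h1 : 0 ≤ 1 - u i := by linarith [hu1 i]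
    calc ((s d) ^ 2) ^ 2 * (1 - u i) = (1 - u i) * ((s d) ^ 2) ^ 2 := mul_comm _ _
      _ ≤ (1 - u i) * ((s i) ^ 2) ^ 2 := mul_le_mul_of_nonneg_left (hsd_le i hi) h1
  have hEFs : ((s d) ^ 2) ^ 2 * (∑' i, u (i + d))
      ≤ ((s d) ^ 2) ^ 2 * ∑ i ∈ Finset.range d, (1 - u i) :=
    mul_le_mul_of_nonneg_left hFE (by positivity)
  constructor
  · linarith [hsplit, htail_le, hstep, hEFs, hcomb]
  intro hgap heq i hi
  have hgap4 : ((s d) ^ 2) ^ 2 < ((s (d - 1)) ^ 2) ^ 2 :=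
    pow4_lt_pow4 (hs d) hgap
  have hlow : ((s (d - 1)) ^ 2) ^ 2 * ∑ i ∈ Finset.range d, (1 - u i)
      ≤ ∑ i ∈ Finset.range d, (1 - u i) * ((s i) ^ 2) ^ 2 := by
    rw [Finset.mul_sum]
    refine Finset.sum_le_sum fun j hj => ?_
    have h1 : 0 ≤ 1 - u j := by linarith [hu1 j]
    have h2 : s (d - 1) ≤ s j := hmono (Nat.le_sub_one_of_lt (Finset.mem_range.mp hj))
    have h3 := pow4_le_pow4 (hs (d - 1)) h2
    calc ((s (d - 1)) ^ 2) ^ 2 * (1 - u j) = (1 - u j) * ((s (d - 1)) ^ 2) ^ 2 := mul_comm _ _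
      _ ≤ (1 - u j) * ((s j) ^ 2) ^ 2 := mul_le_mul_of_nonneg_left h3 h1
  have hE_nonneg : 0 ≤ ∑ i ∈ Finset.range d, (1 - u i) :=
    Finset.sum_nonneg fun i _ => by linarith [hu1 i]
  have hup : ∑ i ∈ Finset.range d, (1 - u i) * ((s i) ^ 2) ^ 2
      ≤ ((s d) ^ 2) ^ 2 * ∑' i, u (i + d) := by
    linarith [hsplit, htail_le, hcomb]
  have hchain : ((s (d - 1)) ^ 2) ^ 2 * ∑ i ∈ Finset.range d, (1 - u i)
      ≤ ((s d) ^ 2) ^ 2 * ∑ i ∈ Finset.range d, (1 - u i) :=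
    le_trans hlow (le_trans hup hEFs)
  have hE0 : ∑ i ∈ Finset.range d, (1 - u i) = 0 := by
    have hle0 : ∑ i ∈ Finset.range d, (1 - u i) ≤ 0 := by
      nlinarith [hchain, hE_nonneg, hgap4]
    exact le_antisymm hle0 hE_nonneg
  have hF0 : (∑' i, u (i + d)) = 0 := le_antisymm (hE0 ▸ hFE) hF_nonneg
  have hterm : u (i - d + d) = 0 := by
    have hle := Summable.le_tsum hutail (i - d) fun j _ => hu0 _
    rw [hF0] at hle
    exact le_antisymm hle (hu0 _)
  rwa [Nat.sub_add_cancel hi] at hterm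

theorem stmt16 (d : ℕ) (hd : 0 < d)
    (s : ℕ → ℝ) (hmono : Antitone s) (hs : ∀ i, 0 ≤ s i)
    (hs2 : Summable fun i => (s i) ^ 2)
    (hgap : s d < s (d - 1)) :
    let B : (Fin d → ℕ → ℝ) → ℕ → ℕ → ℝ := fun C i j => ∑ k, C k i * C k j
    let L : (Fin d → ℕ → ℝ) → ℝ := fun C =>
      -(∑' i, (s i) ^ 2 * B C i i) + (1 / 2) * ∑' i, ∑' j, (B C i j) ^ 2
    let D : ℕ → ℕ → ℝ := fun i j => if i = j then (s i) ^ 2 else 0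
    let Bd : ℕ → ℕ → ℝ := fun i j => if i = j ∧ i < d then (s i) ^ 2 else 0
    (∀ C : Fin d → ℕ → ℝ, (∀ k, Summable fun i => (C k i) ^ 2) →
        L C = (1 / 2) * (∑' i, ∑' j, (B C i j - D i j) ^ 2)
          - (1 / 2) * ∑' i, ((s i) ^ 2) ^ 2) ∧
    (∀ C : Fin d → ℕ → ℝ, (∀ k, Summable fun i => (C k i) ^ 2) →
        -(1 / 2) * ∑ i ∈ Finset.range d, ((s i) ^ 2) ^ 2 ≤ L C) ∧
    (∀ C : Fin d → ℕ → ℝ, (∀ k, Summable fun i => (C k i) ^ 2) →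
        (L C = -(1 / 2) * ∑ i ∈ Finset.range d, ((s i) ^ 2) ^ 2 ↔ B C = Bd)) := by
  classical
  have hs4 : Summable fun i => ((s i) ^ 2) ^ 2 := by
    refine Summable.of_nonneg_of_le (fun i => sq_nonneg _) (fun i => ?_)
      (hs2.mul_left (s 0 ^ 2))
    have h1 : s i ≤ s 0 := hmono (Nat.zero_le i)
    have h2 := hs i
    have h3 : s i ^ 2 ≤ s 0 ^ 2 := by nlinarith
    calc ((s i) ^ 2) ^ 2 = s i ^ 2 * s i ^ 2 := by ring
      _ ≤ s 0 ^ 2 * s i ^ 2 := mul_le_mul_of_nonneg_right h3 (sq_nonneg _)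
  intro B L D Bd
  refine ⟨?_, ?_, ?_⟩
  · -- Part 1: the identity
    intro C hC
    obtain ⟨u, hu0, hu1, husum, hud, hO2, hO3, hO1, hineq, hzero⟩ :=
      scl_core d s hmono hs C hC
    obtain ⟨hBD2, hBDsummable, hBDtot⟩ := scl_expand d s hs4 C hO2 hO3 hO1
    show -(∑' i, (s i) ^ 2 * (∑ k, C k i * C k i))
        + (1 / 2) * ∑' i, ∑' j, (∑ k, C k i * C k j) ^ 2
      = (1 / 2) * (∑' i, ∑' j,
          ((∑ k, C k i * C k j) - (if i = j then (s i) ^ 2 else 0)) ^ 2)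
        - (1 / 2) * ∑' i, ((s i) ^ 2) ^ 2
    rw [hBDtot]
    ring
  · -- Part 2: the lower bound
    intro C hC
    obtain ⟨u, hu0, hu1, husum, hud, hO2, hO3, hO1, hineq, hzero⟩ :=
      scl_core d s hmono hs C hC
    obtain ⟨hle, -⟩ := scl_tail d hd s hmono hs hs4 u hu0 hu1 husum hud
    show -(1 / 2) * ∑ i ∈ Finset.range d, ((s i) ^ 2) ^ 2
      ≤ -(∑' i, (s i) ^ 2 * (∑ k, C k i * C k i))
        + (1 / 2) * ∑' i, ∑' j, (∑ k, C k i * C k j) ^ 2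
    linarith [hineq, hle]
  · -- Part 3: equality characterization
    intro C hC
    obtain ⟨u, hu0, hu1, husum, hud, hO2, hO3, hO1, hineq, hzero⟩ :=
      scl_core d s hmono hs C hC
    obtain ⟨hBD2, hBDsummable, hBDtot⟩ := scl_expand d s hs4 C hO2 hO3 hO1
    obtain ⟨hle, heq0⟩ := scl_tail d hd s hmono hs hs4 u hu0 hu1 husum hud
    show (-(∑' i, (s i) ^ 2 * (∑ k, C k i * C k i))
        + (1 / 2) * ∑' i, ∑' j, (∑ k, C k i * C k j) ^ 2
      = -(1 / 2) * ∑ i ∈ Finset.range d, ((s i) ^ 2) ^ 2)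
      ↔ (fun i j => ∑ k, C k i * C k j)
        = (fun i j : ℕ => if i = j ∧ i < d then (s i) ^ 2 else 0)
    constructor
    · intro hmin
      have hXY : (∑' i, ∑' j, (∑ k, C k i * C k j) ^ 2)
          - 2 * (∑' i, (s i) ^ 2 * (∑ k, C k i * C k i))
          = -(∑ i ∈ Finset.range d, ((s i) ^ 2) ^ 2) := by linarith [hmin]
      have hge : (∑ i ∈ Finset.range d, ((s i) ^ 2) ^ 2)
          ≤ ∑' i, u i * ((s i) ^ 2) ^ 2 := by linarith [hineq]
      have heqtail : (∑' i, u i * ((s i) ^ 2) ^ 2)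
          = ∑ i ∈ Finset.range d, ((s i) ^ 2) ^ 2 := le_antisymm hle hge
      have hu_zero : ∀ i, d ≤ i → u i = 0 := heq0 hgap heqtail
      have hBzero : ∀ i j : ℕ, d ≤ i ∨ d ≤ j → (∑ k, C k i * C k j) = 0 := by
        intro i j hij
        rcases hij with h | h
        · exact (hzero i (hu_zero i h) j).1
        · exact (hzero j (hu_zero j h) i).2
      have hN : (∑' i, ∑' j,
          ((∑ k, C k i * C k j) - (if i = j then (s i) ^ 2 else 0)) ^ 2)
          = (∑' i, ((s i) ^ 2) ^ 2) - ∑ i ∈ Finset.range d, ((s i) ^ 2) ^ 2 := by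
        rw [hBDtot]
        linarith [hXY]
      have hite_summ : Summable fun i => if i < d then ((s i) ^ 2) ^ 2 else (0 : ℝ) := by
        apply summable_of_ne_finset_zero (s := Finset.range d)
        intro i hi
        rw [if_neg (by simpa using hi)]
      have hh_sum : Summable fun i =>
          ((s i) ^ 2) ^ 2 - (if i < d then ((s i) ^ 2) ^ 2 else 0) := hs4.sub hite_summ
      have htsum_h : ∑' i, (((s i) ^ 2) ^ 2 - (if i < d then ((s i) ^ 2) ^ 2 else 0))
          = (∑' i, ((s i) ^ 2) ^ 2) - ∑ i ∈ Finset.range d, ((s i) ^ 2) ^ 2 := by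
        rw [Summable.tsum_sub hs4 hite_summ,
          tsum_eq_sum (s := Finset.range d) (fun i hi => if_neg (by simpa using hi))]
        congr 1
        exact Finset.sum_congr rfl fun i hi => if_pos (Finset.mem_range.mp hi)
      have hgh : ∀ i, (((s i) ^ 2) ^ 2 - (if i < d then ((s i) ^ 2) ^ 2 else 0))
          ≤ ∑' j, ((∑ k, C k i * C k j) - (if i = j then (s i) ^ 2 else 0)) ^ 2 := by
        intro i
        by_cases h : i < d
        · rw [if_pos h]
          simpa using tsum_nonneg
            (fun j => sq_nonneg ((∑ k, C k i * C k j) - (if i = j then (s i) ^ 2 else 0)))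
        · rw [if_neg h]
          have hrow : ∑' j, ((∑ k, C k i * C k j) - (if i = j then (s i) ^ 2 else 0)) ^ 2
              = ((s i) ^ 2) ^ 2 := by
            rw [tsum_eq_single i (fun j hj => ?_)]
            · rw [hBzero i i (Or.inl (le_of_not_gt h)), if_pos rfl]
              ring
            · rw [hBzero i j (Or.inl (le_of_not_gt h)), if_neg (fun hc => hj hc.symm)]
              ring
          rw [hrow]
          simp
      have hdiff0 : ∑' i,
          ((∑' j, ((∑ k, C k i * C k j) - (if i = j then (s i) ^ 2 else 0)) ^ 2)
            - (((s i) ^ 2) ^ 2 - (if i < d then ((s i) ^ 2) ^ 2 else 0))) = 0 := by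
        rw [Summable.tsum_sub hBDsummable hh_sum, htsum_h, hN]
        ring
      have hg0 : ∀ i, i < d →
          (∑' j, ((∑ k, C k i * C k j) - (if i = j then (s i) ^ 2 else 0)) ^ 2) = 0 := by
        intro i hi
        have h1 := Summable.le_tsum (hBDsummable.sub hh_sum) i
          (fun j _ => sub_nonneg.mpr (hgh j))
        rw [hdiff0] at h1
        have h2 : (((s i) ^ 2) ^ 2 - (if i < d then ((s i) ^ 2) ^ 2 else 0)) = 0 := by
          rw [if_pos hi]
          ring
        have h3 : 0 ≤ ∑' j, ((∑ k, C k i * C k j) - (if i = j then (s i) ^ 2 else 0)) ^ 2 := tsum_nonneg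
          (fun j => sq_nonneg ((∑ k, C k i * C k j) - (if i = j then (s i) ^ 2 else 0)))
        rw [h2] at h1
        linarith [h1, h3]
      have hBD0 : ∀ i j, i < d →
          (∑ k, C k i * C k j) = (if i = j then (s i) ^ 2 else 0) := by
        intro i j hi
        have h1 := Summable.le_tsum (hBD2 i) j (fun j' _ => sq_nonneg _)
        rw [hg0 i hi] at h1
        have h2 := sq_nonneg ((∑ k, C k i * C k j) - (if i = j then (s i) ^ 2 else 0))
        have h3 : ((∑ k, C k i * C k j) - (if i = j then (s i) ^ 2 else 0)) ^ 2 = 0 :=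
          le_antisymm h1 h2
        have h4 := pow_eq_zero_iff (n := 2) (by norm_num) |>.mp h3
        linarith [h4]
      funext i j
      by_cases hi : i < d
      · rw [hBD0 i j hi]
        by_cases hij : i = j
        · rw [if_pos hij, if_pos ⟨hij, hi⟩]
        · rw [if_neg hij, if_neg (fun hc => hij hc.1)]
      · rw [hBzero i j (Or.inl (le_of_not_gt hi)), if_neg (fun hc => hi hc.2)]
    · intro hBC
      have hBij : ∀ i j, (∑ k, C k i * C k j)
          = (if i = j ∧ i < d then (s i) ^ 2 else 0) :=
        fun i j => congrFun (congrFun hBC i) j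
      have hY : ∑' i, (s i) ^ 2 * (∑ k, C k i * C k i)
          = ∑ i ∈ Finset.range d, ((s i) ^ 2) ^ 2 := by
        have h1 : ∀ i : ℕ, (s i) ^ 2 * (∑ k, C k i * C k i)
            = if i < d then ((s i) ^ 2) ^ 2 else 0 := by
          intro i
          rw [hBij i i]
          by_cases h : i < d
          · rw [if_pos ⟨rfl, h⟩, if_pos h]
            ring
          · rw [if_neg (fun hc => h hc.2), if_neg h]
            ring
        rw [tsum_congr h1,
          tsum_eq_sum (s := Finset.range d) (fun i hi => if_neg (by simpa using hi))]
        exact Finset.sum_congr rfl fun i hi => if_pos (Finset.mem_range.mp hi)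
      have hX : ∑' i, ∑' j, (∑ k, C k i * C k j) ^ 2
          = ∑ i ∈ Finset.range d, ((s i) ^ 2) ^ 2 := by
        have h1 : ∀ i : ℕ, ∑' j, (∑ k, C k i * C k j) ^ 2
            = if i < d then ((s i) ^ 2) ^ 2 else 0 := by
          intro i
          have h2 : ∀ j, j ≠ i → (∑ k, C k i * C k j) ^ 2 = 0 := by
            intro j hj
            rw [hBij i j, if_neg (fun hc => hj hc.1.symm)]
            norm_num
          rw [tsum_eq_single i h2, hBij i i]
          by_cases h : i < d
          · rw [if_pos ⟨rfl, h⟩, if_pos h]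
          · rw [if_neg (fun hc => h hc.2), if_neg h]
            norm_num
        rw [tsum_congr h1,
          tsum_eq_sum (s := Finset.range d) (fun i hi => if_neg (by simpa using hi))]
        exact Finset.sum_congr rfl fun i hi => if_pos (Finset.mem_range.mp hi)
      rw [hY, hX]
      ring
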